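/- Let r > 0, q ∈ ℝ, σ > 0, E > 0, c ∈ ℝ. There exists Δx₀ > 0 such that for every 0 < Δx < Δx₀ and every Δt > 0 with w = σ²Δt/Δx² ≤ 1 (so that, setting a = 1/2 + (r−q−σ²/2)·Δx/(2σ²) and ρ = 1 + rΔt, one has 0 < a < 1 and ρ > 1), the perpetual American put explicit difference scheme has a solution (U, j*); moreover the solution is given explicitly by U_j = (E − e^{j*Δx+c})·ξ₁^{j−j*} for j ≥ j* and U_j = E − e^{jΔx+c} for j ≤ j*, where ξ₁ ∈ (0,1) is the smaller root of the characteristic equation w·a·ξ² − (ρ+w−1)·ξ + w·(1−a) = 0. -/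

import Mathlib

/-- A solution of the perpetual American put explicit difference scheme:
a pair `(U, j*)` with
(a) `U_j = E − e^{jΔx+c}` for `j ≤ j*`;
(b) for `j > j*`, `U_j > (E − e^{jΔx+c})⁺` and
    `ρ·U_j = (1−w)·U_j + w·(a·U_{j+1} + (1−a)·U_{j−1})`;
(c) `E − e^{j*Δx+c} ≥ (1/ρ)·[(1−w)·U_{j*} + w·(a·U_{j*+1} + (1−a)·U_{j*−1})]`;
(d) `U_j → 0` as `j → +∞`. -/
def IsSchemeSolution (E Δx c ρ w a : ℝ) (U : ℤ → ℝ) (jstar : ℤ) : Prop :=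
  (∀ j : ℤ, j ≤ jstar → U j = E - Real.exp ((j : ℝ) * Δx + c)) ∧
  (∀ j : ℤ, jstar < j → max (E - Real.exp ((j : ℝ) * Δx + c)) 0 < U j ∧
    ρ * U j = (1 - w) * U j + w * (a * U (j + 1) + (1 - a) * U (j - 1))) ∧
  (E - Real.exp ((jstar : ℝ) * Δx + c) ≥
    (1 / ρ) * ((1 - w) * U jstar + w * (a * U (jstar + 1) + (1 - a) * U (jstar - 1)))) ∧
  Filter.Tendsto U Filter.atTop (nhds 0)

open Filter Real

theorem int_toNat_tendsto : Tendsto Int.toNat atTop atTop := by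
  apply tendsto_atTop_atTop.mpr
  intro b
  exact ⟨(b : ℤ), fun n hn => by omega⟩

theorem zpow_tendsto_zero {ξ : ℝ} (h0 : 0 < ξ) (h1 : ξ < 1) :
    Tendsto (fun n : ℤ => ξ ^ n) atTop (nhds 0) := by
  have hnat : Tendsto (fun n : ℕ => ξ ^ n) atTop (nhds 0) :=
    tendsto_pow_atTop_nhds_zero_of_lt_one h0.le h1
  have := hnat.comp int_toNat_tendsto
  apply this.congr'
  filter_upwards [eventually_ge_atTop (0 : ℤ)] with n hn
  simp only [Function.comp]
  rw [← zpow_natCast, Int.toNat_of_nonneg hn]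

set_option maxHeartbeats 1000000 in
theorem scheme_aux (E Δx c ρ w a : ℝ) (hE : 0 < E) (hΔx : 0 < Δx)
    (hρ : 1 < ρ) (hw : 0 < w) (hw1 : w ≤ 1) (ha : 0 < a) (ha1 : a < 1) :
    ∃ (U : ℤ → ℝ) (jstar : ℤ) (ξ₁ : ℝ),
      0 < ξ₁ ∧ ξ₁ < 1 ∧
      w * a * ξ₁ ^ 2 - (ρ + w - 1) * ξ₁ + w * (1 - a) = 0 ∧
      IsSchemeSolution E Δx c ρ w a U jstar ∧
      (∀ j : ℤ, jstar ≤ j →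
        U j = (E - Real.exp ((jstar : ℝ) * Δx + c)) * ξ₁ ^ (j - jstar)) ∧
      (∀ j : ℤ, j ≤ jstar → U j = E - Real.exp ((j : ℝ) * Δx + c)) := by
  have hβ : (0:ℝ) < ρ + w - 1 := by linarith
  obtain ⟨β, hβdef⟩ : ∃ t : ℝ, t = ρ + w - 1 := ⟨_, rfl⟩
  have hβw : w < β := by simp only [hβdef]; linarith
  have hβ0 : 0 < β := by rw [hβdef]; linarith
  obtain ⟨D, hDdef⟩ : ∃ t : ℝ, t = β ^ 2 - 4 * w ^ 2 * a * (1 - a) := ⟨_, rfl⟩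
  have hD : 0 < D := by
    rw [hDdef]
    linarith [mul_pos (sub_pos.2 hβw) (by linarith : (0:ℝ) < β + w), mul_nonneg (sq_nonneg w) (sq_nonneg (2*a-1))]
  obtain ⟨s, hsdef⟩ : ∃ t : ℝ, t = Real.sqrt D := ⟨_, rfl⟩
  have hs2 : s ^ 2 = D := by rw [hsdef]; exact Real.sq_sqrt hD.le
  have hs0 : 0 < s := by rw [hsdef]; exact Real.sqrt_pos.mpr hD
  have hsβ : s < β := by
    have h1 : s ^ 2 < β ^ 2 := by
      rw [hs2, hDdef]; linarith [mul_pos (mul_pos (mul_pos hw hw) ha) (sub_pos.2 ha1)]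
    exact lt_of_pow_lt_pow_left₀ 2 hβ0.le h1
  have hwa : 0 < 2 * w * a := by positivity
  obtain ⟨ξ, hξdef⟩ : ∃ t : ℝ, t = (β - s) / (2 * w * a) := ⟨_, rfl⟩
  have hξ0 : 0 < ξ := by rw [hξdef]; exact div_pos (by linarith) hwa
  have hchar : w * a * ξ ^ 2 - β * ξ + w * (1 - a) = 0 := by
    have h2 : ξ * (2 * w * a) = β - s := by rw [hξdef]; exact div_mul_cancel₀ _ hwa.ne'
    have hs2' : s ^ 2 = β ^ 2 - 4 * w ^ 2 * a * (1 - a) := by rw [hs2, hDdef]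
    have h4 : (0:ℝ) < 4 * w * a := by positivity
    have expand : (4 * w * a) * (w * a * ξ ^ 2 - β * ξ + w * (1 - a))
        = (ξ * (2 * w * a)) ^ 2 - 2 * β * (ξ * (2 * w * a)) + 4 * w ^ 2 * a * (1 - a) := by ring
    have : (4 * w * a) * (w * a * ξ ^ 2 - β * ξ + w * (1 - a)) = 0 := by
      rw [expand, h2]
      linear_combination hs2'
    exact (mul_eq_zero.mp this).resolve_left h4.ne'
  have hξ1 : ξ < 1 := by
    rw [hξdef, div_lt_one hwa]
    rcases le_or_gt (β - 2 * w * a) 0 with h | h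
    · linarith
    · have h1 : (β - 2*w*a) ^ 2 < s ^ 2 := by
        rw [hs2, hDdef]; linarith [mul_pos (mul_pos hw ha) (sub_pos.2 hβw)]
      have := lt_of_pow_lt_pow_left₀ 2 hs0.le h1
      linarith [le_abs_self (β - 2*w*a), this]
  obtain ⟨γ, hγdef⟩ : ∃ t : ℝ, t = β - w * a * ξ := ⟨_, rfl⟩
  have hγ : 0 < γ := by
    have : w * a * ξ < w := by
      linarith [mul_lt_mul_of_pos_left hξ1 (mul_pos hw ha), mul_lt_mul_of_pos_left ha1 hw]
    simp only [hγdef]; linarith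
  have hξγ : w * (1 - a) = ξ * γ := by
    simp only [hγdef]; linear_combination hchar
  have hed0 : 0 < Real.exp (-Δx) := Real.exp_pos _
  have hed1 : Real.exp (-Δx) < 1 := Real.exp_lt_one_iff.mpr (by linarith)
  have hden : 0 < 1 - ξ * Real.exp (-Δx) := by linarith [mul_lt_mul_of_pos_left hed1 hξ0]
  have hnum : 0 < E * (1 - ξ) := mul_pos hE (by linarith)
  obtain ⟨T, hTdef⟩ : ∃ t : ℝ, t = E * (1 - ξ) / (1 - ξ * Real.exp (-Δx)) := ⟨_, rfl⟩
  have hT0 : 0 < T := by rw [hTdef]; exact div_pos hnum hden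
  have hTE : T < E := by
    rw [hTdef, div_lt_iff₀ hden]
    linarith [mul_pos hE (mul_pos hξ0 (sub_pos.2 hed1))]
  obtain ⟨jstar, hjdef⟩ : ∃ t : ℤ, t = ⌊(Real.log T - c) / Δx⌋ := ⟨_, rfl⟩
  obtain ⟨x, hxdef⟩ : ∃ t : ℝ, t = Real.exp ((jstar : ℝ) * Δx + c) := ⟨_, rfl⟩
  have hx0 : 0 < x := by rw [hxdef]; exact Real.exp_pos _
  have hx1 : x ≤ T := by
    rw [hxdef, ← Real.exp_log hT0]
    apply Real.exp_le_exp.mpr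
    have h := Int.floor_le ((Real.log T - c) / Δx)
    rw [← hjdef] at h
    have := (le_div_iff₀ hΔx).mp h
    linarith
  have hx2 : T < x * Real.exp Δx := by
    rw [hxdef, ← Real.exp_add, ← Real.exp_log hT0]
    apply Real.exp_lt_exp.mpr
    have h := Int.lt_floor_add_one ((Real.log T - c) / Δx)
    rw [← hjdef] at h
    have h2 := (div_lt_iff₀ hΔx).mp h
    push_cast at h2
    linarith [h2, show ((jstar:ℝ)+1)*Δx = (jstar:ℝ)*Δx + Δx from by ring]
  obtain ⟨K, hKdef⟩ : ∃ t : ℝ, t = E - x := ⟨_, rfl⟩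
  have hK : 0 < K := by simp only [hKdef]; linarith
  have hee : Real.exp Δx * Real.exp (-Δx) = 1 := by
    rw [← Real.exp_add]; simp
  have he1 : 1 < Real.exp Δx := by
    rw [show (1:ℝ) = Real.exp 0 by simp]; exact Real.exp_lt_exp.mpr hΔx
  have hcle : x * (1 - ξ * Real.exp (-Δx)) ≤ E * (1 - ξ) := by
    have := mul_le_mul_of_nonneg_right hx1 hden.le
    rw [hTdef, div_mul_cancel₀ _ hden.ne'] at this
    exact this
  have hφ1 : E < K * ξ + x * Real.exp Δx := by
    have h2 : E * (1 - ξ) < x * Real.exp Δx * (1 - ξ * Real.exp (-Δx)) := by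
      rw [hTdef] at hx2
      exact (div_lt_iff₀ hden).mp hx2
    have h4 : x * Real.exp Δx * (1 - ξ * Real.exp (-Δx)) = x * Real.exp Δx - x * ξ := by
      linear_combination (-(x * ξ)) * hee
    rw [h4] at h2
    simp only [hKdef]
    linarith
  set U : ℤ → ℝ := fun j => if j ≤ jstar then E - Real.exp ((j : ℝ) * Δx + c)
    else K * ξ ^ (j - jstar) with hUdef
  have hUle : ∀ j : ℤ, j ≤ jstar → U j = E - Real.exp ((j : ℝ) * Δx + c) := by
    intro j hj; simp only [hUdef, if_pos hj]
  have hUrep : ∀ j : ℤ, jstar ≤ j → U j = K * ξ ^ (j - jstar) := by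
    intro j hj
    rcases eq_or_lt_of_le hj with h | h
    · rw [hUle j h.ge]
      rw [← h]; simp [hxdef, hKdef]
    · simp only [hUdef, if_neg (not_le.mpr h)]
  have hexpj : ∀ j : ℤ, Real.exp ((j : ℝ) * Δx + c)
      = x * Real.exp (((j - jstar : ℤ) : ℝ) * Δx) := by
    intro j
    rw [hxdef, ← Real.exp_add]
    congr 1
    push_cast
    ring
  have hφ : ∀ n : ℤ, 1 ≤ n → E < K * ξ ^ n + x * Real.exp ((n : ℝ) * Δx) := by
    refine fun n hn => Int.le_induction
      (motive := fun n _ => E < K * ξ ^ n + x * Real.exp ((n : ℝ) * Δx)) (m := 1) ?_ ?_ n hn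
    · simpa using hφ1
    · intro n hn1 ih'
      have hξn : ξ ^ n ≤ 1 := by
        rw [show n = ((n.toNat : ℕ) : ℤ) by omega, zpow_natCast]
        exact pow_le_one₀ hξ0.le hξ1.le
      have hen : 1 ≤ Real.exp ((n : ℝ) * Δx) := by
        apply Real.one_le_exp
        have : (0:ℝ) ≤ (n : ℝ) := by exact_mod_cast (by omega : (0:ℤ) ≤ n)
        positivity
      have e1 : ξ ^ (n + 1) = ξ ^ n * ξ := zpow_add_one₀ hξ0.ne' n
      have e2 : Real.exp (((n + 1 : ℤ) : ℝ) * Δx) = Real.exp ((n : ℝ) * Δx) * Real.exp Δx := by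
        rw [← Real.exp_add]; congr 1; push_cast; ring
      rw [e1]
      push_cast
      rw [show ((n:ℝ) + 1) * Δx = (n:ℝ) * Δx + Δx by ring, Real.exp_add]
      linarith [mul_nonneg (mul_nonneg hx0.le (sub_nonneg.2 he1.le)) (sub_nonneg.2 hen),
        mul_nonneg (mul_nonneg hK.le (sub_nonneg.2 hξ1.le)) (sub_nonneg.2 hξn), hKdef]
  have hγ' : γ = ρ + w - 1 - w * a * ξ := by rw [hγdef, hβdef]
  have hchar' : w * a * ξ ^ 2 - (ρ + w - 1) * ξ + w * (1 - a) = 0 := by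
    rw [← hβdef]; exact hchar
  have hUj0 : U jstar = E - x := by rw [hUle jstar le_rfl, ← hxdef]
  have hUj1 : U (jstar + 1) = K * ξ := by
    rw [hUrep (jstar + 1) (by omega), show jstar + 1 - jstar = (1:ℤ) by omega, zpow_one]
  have hUjm : U (jstar - 1) = E - x * Real.exp (-Δx) := by
    rw [hUle (jstar - 1) (by omega), hexpj (jstar - 1)]
    congr 2
    push_cast
    ring
  refine ⟨U, jstar, ξ, hξ0, hξ1, hchar', ⟨hUle, ?_, ?_, ?_⟩, ?_, hUle⟩
  · -- condition (b)
    intro j hj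
    have hn1 : 1 ≤ j - jstar := by omega
    have hUj : U j = K * ξ ^ (j - jstar) := hUrep j hj.le
    have hpos : 0 < K * ξ ^ (j - jstar) := mul_pos hK (zpow_pos hξ0 _)
    constructor
    · rw [hUj, hexpj j]
      apply max_lt _ hpos
      have := hφ (j - jstar) hn1
      linarith
    · have hU1 : U (j + 1) = K * ξ ^ (j + 1 - jstar) := hUrep (j + 1) (by omega)
      have hU2 : U (j - 1) = K * ξ ^ (j - 1 - jstar) := hUrep (j - 1) (by omega)
      rw [hUj, hU1, hU2]
      have he1' : j - jstar = (j - 1 - jstar) + 1 := by ring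
      have he2' : j + 1 - jstar = (j - 1 - jstar) + 2 := by ring
      rw [he1', he2', zpow_add₀ hξ0.ne' _ (1:ℤ), zpow_add₀ hξ0.ne' _ (2:ℤ), zpow_one]
      have hz2 : (ξ : ℝ) ^ (2:ℤ) = ξ ^ (2:ℕ) := by
        rw [zpow_two, sq]
      rw [hz2]
      linear_combination (-(K * ξ ^ (j - 1 - jstar))) * hchar'
  · -- condition (c)
    rw [ge_iff_le, ← hxdef, hUj0, hUj1, hUjm]
    rw [one_div, inv_mul_le_iff₀ (by linarith : (0:ℝ) < ρ)]
    have key : ρ * (E - x) - ((1 - w) * (E - x) + w * (a * (K * ξ) + (1 - a) * (E - x * Real.exp (-Δx))))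
        = γ * (E * (1 - ξ) - x * (1 - ξ * Real.exp (-Δx))) := by
      rw [hKdef]
      linear_combination (x * Real.exp (-Δx) - E) * hξγ - (E - x) * hγ'
    linarith [mul_nonneg hγ.le (sub_nonneg.mpr hcle), key]
  · -- (d) Tendsto
    have h1 := zpow_tendsto_zero hξ0 hξ1
    have h2 : Tendsto (fun j : ℤ => j - jstar) atTop atTop := by
      simpa [sub_eq_add_neg] using tendsto_atTop_add_const_right atTop (-jstar) (tendsto_id (α := ℤ))
    have h3 : Tendsto (fun j : ℤ => K * ξ ^ (j - jstar)) atTop (nhds (K * 0)) :=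
      (h1.comp h2).const_mul K
    rw [mul_zero] at h3
    apply h3.congr'
    filter_upwards [eventually_ge_atTop jstar] with j hj
    exact (hUrep j hj).symm
  · -- explicit representation
    intro j hj
    rw [hUrep j hj, hKdef, hxdef]

/-- Existence and explicit representation of the solution of the explicit difference
scheme for the perpetual American put price: for all sufficiently small `Δx` and any
`Δt > 0` with `w = σ²Δt/Δx² ≤ 1` (so that `0 < a < 1` and `ρ > 1`), a solution `(U, j*)`
exists, given by `U_j = (E − e^{j*Δx+c})·ξ₁^{j−j*}` for `j ≥ j*` and `U_j = E − e^{jΔx+c}`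
for `j ≤ j*`, where `ξ₁ ∈ (0,1)` is the smaller root of the characteristic equation. -/
theorem scheme_solution_exists
    (r q σ E c : ℝ) (hr : 0 < r) (hσ : 0 < σ) (hE : 0 < E) :
    ∃ Δx₀ : ℝ, 0 < Δx₀ ∧ ∀ Δx : ℝ, 0 < Δx → Δx < Δx₀ → ∀ Δt : ℝ, 0 < Δt →
      σ ^ 2 * Δt / Δx ^ 2 ≤ 1 →
      (0 < 1 / 2 + (r - q - σ ^ 2 / 2) * Δx / (2 * σ ^ 2) ∧
        1 / 2 + (r - q - σ ^ 2 / 2) * Δx / (2 * σ ^ 2) < 1 ∧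
        1 < 1 + r * Δt) ∧
      ∃ (U : ℤ → ℝ) (jstar : ℤ) (ξ₁ : ℝ),
        0 < ξ₁ ∧ ξ₁ < 1 ∧
        (σ ^ 2 * Δt / Δx ^ 2) * (1 / 2 + (r - q - σ ^ 2 / 2) * Δx / (2 * σ ^ 2)) * ξ₁ ^ 2
          - ((1 + r * Δt) + σ ^ 2 * Δt / Δx ^ 2 - 1) * ξ₁
          + (σ ^ 2 * Δt / Δx ^ 2) *
              (1 - (1 / 2 + (r - q - σ ^ 2 / 2) * Δx / (2 * σ ^ 2))) = 0 ∧
        IsSchemeSolution E Δx c (1 + r * Δt) (σ ^ 2 * Δt / Δx ^ 2)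
          (1 / 2 + (r - q - σ ^ 2 / 2) * Δx / (2 * σ ^ 2)) U jstar ∧
        (∀ j : ℤ, jstar ≤ j →
          U j = (E - Real.exp ((jstar : ℝ) * Δx + c)) * ξ₁ ^ (j - jstar)) ∧
        (∀ j : ℤ, j ≤ jstar → U j = E - Real.exp ((j : ℝ) * Δx + c)) := by
  refine ⟨σ ^ 2 / (|r - q - σ ^ 2 / 2| + 1), by positivity, ?_⟩
  intro Δx hΔx hΔx0 Δt hΔt hw1
  have hσ2 : (0:ℝ) < σ ^ 2 := by positivity
  have habs : |r - q - σ ^ 2 / 2| * Δx < σ ^ 2 := by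
    have hpos : (0:ℝ) < |r - q - σ ^ 2 / 2| + 1 := by positivity
    have h1 : Δx * (|r - q - σ ^ 2 / 2| + 1) < σ ^ 2 := (lt_div_iff₀ hpos).mp hΔx0
    nlinarith [abs_nonneg (r - q - σ ^ 2 / 2), hΔx]
  have h1 : (r - q - σ ^ 2 / 2) * Δx / (2 * σ ^ 2) < 1 / 2 := by
    rw [div_lt_iff₀ (by positivity : (0:ℝ) < 2 * σ ^ 2)]
    linarith [mul_le_mul_of_nonneg_right (le_abs_self (r - q - σ ^ 2 / 2)) hΔx.le]
  have h2 : -(1/2 : ℝ) < (r - q - σ ^ 2 / 2) * Δx / (2 * σ ^ 2) := by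
    rw [lt_div_iff₀ (by positivity : (0:ℝ) < 2 * σ ^ 2)]
    linarith [mul_le_mul_of_nonneg_right (neg_abs_le (r - q - σ ^ 2 / 2)) hΔx.le]
  have ha : 0 < 1 / 2 + (r - q - σ ^ 2 / 2) * Δx / (2 * σ ^ 2) := by linarith
  have ha1 : 1 / 2 + (r - q - σ ^ 2 / 2) * Δx / (2 * σ ^ 2) < 1 := by linarith
  have hρ : 1 < 1 + r * Δt := by nlinarith [mul_pos hr hΔt]
  have hw : 0 < σ ^ 2 * Δt / Δx ^ 2 := by positivity
  exact ⟨⟨ha, ha1, hρ⟩, scheme_aux E Δx c _ _ _ hE hΔx hρ hw hw1 ha ha1⟩
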